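/- Let p ∈ ℝ, q ≥ 0, t ≥ 0, and set ω = 1/(1+t). Define a = ω^{p/2}, c = ω^{-p/2}, b = ω^{p/2} · q/(1 + √(1+qt)), and d = −ω^{-p/2} · q/(1 + qt + √(1+qt)). Then: (i) a c = 1; (ii) a² = ω^p; (iii) c² ω^p = 1; (iv) a d + b(c + d t) = 0; (v) c b + d(a + b t) = 0; (vi) 2 a b + b² t = q a²; (vii) q d² t² + (d² + 2 c d q) t + 2 c d + c² q = 0. -/

import Mathlib

theorem stmt_7 (p q t : ℝ) (hq : 0 ≤ q) (ht : 0 ≤ t) :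
    let ω : ℝ := 1 / (1 + t)
    let a : ℝ := ω ^ (p / 2)
    let c : ℝ := ω ^ (-(p / 2))
    let b : ℝ := ω ^ (p / 2) * (q / (1 + Real.sqrt (1 + q * t)))
    let d : ℝ := -(ω ^ (-(p / 2)) * (q / (1 + q * t + Real.sqrt (1 + q * t))))
    a * c = 1 ∧
    a ^ 2 = ω ^ p ∧
    c ^ 2 * ω ^ p = 1 ∧
    a * d + b * (c + d * t) = 0 ∧
    c * b + d * (a + b * t) = 0 ∧
    2 * a * b + b ^ 2 * t = q * a ^ 2 ∧
    q * d ^ 2 * t ^ 2 + (d ^ 2 + 2 * c * d * q) * t + 2 * c * d + c ^ 2 * q = 0 := by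
  intro ω a c b d
  have hω : (0:ℝ) < ω := by
    have : (0:ℝ) < 1 + t := by linarith
    positivity
  set s : ℝ := Real.sqrt (1 + q * t) with hsdef
  have hqt : (0:ℝ) ≤ 1 + q * t := by positivity
  have hs2 : s ^ 2 = 1 + q * t := Real.sq_sqrt hqt
  have hs1 : 1 ≤ s := by
    rw [hsdef]
    have h := Real.sqrt_le_sqrt (show (1:ℝ) ≤ 1 + q * t by nlinarith)
    simpa using h
  have hden1 : (1 : ℝ) + s ≠ 0 := by nlinarith
  have hden2 : (1 : ℝ) + q * t + s ≠ 0 := by nlinarith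
  have hac : a * c = 1 := by
    show ω ^ (p/2) * ω ^ (-(p/2)) = 1
    rw [← Real.rpow_add hω]
    simp
  have ha2 : a ^ 2 = ω ^ p := by
    show (ω ^ (p/2)) ^ 2 = ω ^ p
    rw [← Real.rpow_natCast (ω ^ (p/2)) 2, ← Real.rpow_mul hω.le]
    norm_num
  have hc2 : c ^ 2 * ω ^ p = 1 := by
    have : c ^ 2 = ω ^ (-p) := by
      show (ω ^ (-(p/2))) ^ 2 = ω ^ (-p)
      rw [← Real.rpow_natCast (ω ^ (-(p/2))) 2, ← Real.rpow_mul hω.le]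
      norm_num
    rw [this, ← Real.rpow_add hω]
    simp
  set κ : ℝ := q / (1 + s) with hκ
  set lam : ℝ := q / (1 + q * t + s) with hlam
  have habd : b = a * κ := rfl
  have hcdd : d = -(c * lam) := rfl
  have key1 : κ - lam - κ * lam * t = 0 := by
    rw [hκ, hlam]
    field_simp
    nlinarith [hs2]
  have key2 : κ - lam * (1 + κ * t) = 0 := by
    rw [hκ, hlam]
    field_simp
    nlinarith [hs2]
  have key3 : 2 * κ + κ ^ 2 * t = q := by
    rw [hκ]
    field_simp
    linear_combination (-q) * hs2
  have hs0 : s ≠ 0 := by nlinarith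
  have hD : 1 + q * t + s = s * (1 + s) := by linear_combination (-1 : ℝ) * hs2
  have key4 : q * lam ^ 2 * t ^ 2 + (lam ^ 2 - 2 * lam * q) * t - 2 * lam + q = 0 := by
    rw [hlam, hD]
    field_simp
    linear_combination (q * s ^ 4 * (1 + s) ^ 4 * (s ^ 2 + 2 * s - q * t) - q * ((1 - 2*s - 2*s^2 - s^4 - 2*s^5 + 4*s^6 + 16*s^7 + 19*s^8 + 10*s^9 + 2*s^10) + (1 - s^4*(1+s)^4) * (q*t + s^2 - 1))) * hs2
  refine ⟨hac, ha2, hc2, ?_, ?_, ?_, ?_⟩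
  · rw [habd, hcdd]
    linear_combination (κ - lam - κ * lam * t) * hac + key1
  · rw [habd, hcdd]
    linear_combination (κ - lam * (1 + κ * t)) * hac + key2
  · rw [habd]
    linear_combination (a ^ 2) * key3
  · rw [hcdd]
    linear_combination (c ^ 2) * key4
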